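/- Let M = (m_{i,j}) be an optimal n×n k-uniform binary matrix, let 1 ≤ j ≤ n−1, and suppose i1 ∈ X_{1,0}^j, i2 ∈ X_{0,1}^j and S_{i1,j} = S_{i2,j}. Let M' be the matrix obtained from M by replacing rows R_{i1} and R_{i2} with R'_{i1} = (m_{i1,1},…,m_{i1,j}, m_{i2,j+1},…,m_{i2,n}) and R'_{i2} = (m_{i2,1},…,m_{i2,j}, m_{i1,j+1},…,m_{i1,n}) respectively (all other rows unchanged). Then M' is k-uniform and optimal. -/

import Mathlib

/-- `M` is a binary (0/1) matrix. -/
def IsBinary {n : ℕ} (M : Fin n → Fin n → ℕ) : Prop :=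
  ∀ i j, M i j = 0 ∨ M i j = 1

/-- Every row and every column of `M` contains exactly `k` entries equal to `1`. -/
def IsUniform {n : ℕ} (k : ℕ) (M : Fin n → Fin n → ℕ) : Prop :=
  (∀ i, (Finset.univ.filter fun j => M i j = 1).card = k) ∧
  (∀ j, (Finset.univ.filter fun i => M i j = 1).card = k)

/-- Partial row sum `S_{i,j}`: sum of the entries of row `i` in columns `≤ j`. -/
def RowSum {n : ℕ} (M : Fin n → Fin n → ℕ) (i j : Fin n) : ℕ :=
  ∑ l ∈ Finset.Iic j, M i l

/-- An assignment mapping between columns `j` and `j'`: a bijection from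
`{i : M i j = 1}` onto `{i : M i j' = 1}`. -/
def IsAssignment {n : ℕ} (M : Fin n → Fin n → ℕ) (j j' : Fin n) (φ : Fin n → Fin n) : Prop :=
  Set.BijOn φ {i | M i j = 1} {i | M i j' = 1}

/-- Condition (2): `S_{φ(i),j} ≤ S_{i,j}` for all `i` in the domain. -/
def Cond2 {n : ℕ} (M : Fin n → Fin n → ℕ) (j : Fin n) (φ : Fin n → Fin n) : Prop :=
  ∀ i, M i j = 1 → RowSum M (φ i) j ≤ RowSum M i j

/-- Condition (1): `φ(i) = i` exactly when `m_{i,j} = m_{i,j'} = 1`. -/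
def Cond1 {n : ℕ} (M : Fin n → Fin n → ℕ) (j j' : Fin n) (φ : Fin n → Fin n) : Prop :=
  ∀ i, M i j = 1 → (φ i = i ↔ (M i j = 1 ∧ M i j' = 1))

/-- `M` is optimal: it is `k`-uniform for some `k`, and between each pair of consecutive
columns there is an assignment mapping satisfying Condition (2). -/
def Optimal {n : ℕ} (M : Fin n → Fin n → ℕ) : Prop :=
  (∃ k, IsUniform k M) ∧
  ∀ j : ℕ, ∀ hj : j + 1 < n, ∃ φ : Fin n → Fin n,
    IsAssignment M ⟨j, Nat.lt_of_succ_lt hj⟩ ⟨j + 1, hj⟩ φ ∧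
    Cond2 M ⟨j, Nat.lt_of_succ_lt hj⟩ φ

/-- The matrix obtained from `M` by swapping the tails (columns after `j`,
0-indexed: columns `> j`) of rows `i1` and `i2`. -/
def swapTails {n : ℕ} (M : Fin n → Fin n → ℕ) (i1 i2 : Fin n) (j : ℕ) :
    Fin n → Fin n → ℕ :=
  fun i l =>
    if i = i1 then (if (l : ℕ) ≤ j then M i1 l else M i2 l)
    else if i = i2 then (if (l : ℕ) ≤ j then M i2 l else M i1 l)
    else M i l

/-- if `M` is an optimal `k`-uniform binary matrix, `i1 ∈ X₁₀ʲ`,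
`i2 ∈ X₀₁ʲ` and `S_{i1,j} = S_{i2,j}`, then swapping the tails of rows `i1` and `i2`
after column `j` yields a `k`-uniform optimal matrix. -/

private lemma card_filter_eq_sum {n : ℕ} (f : Fin n → ℕ) (hb : ∀ x, f x = 0 ∨ f x = 1)
    (s : Finset (Fin n)) : (s.filter fun x => f x = 1).card = ∑ x ∈ s, f x := by
  rw [Finset.card_filter]
  exact Finset.sum_congr rfl fun x _ => by rcases hb x with h | h <;> simp [h]

theorem stmt_11 {n k : ℕ} (M : Fin n → Fin n → ℕ)
    (hbin : IsBinary M) (hunif : IsUniform k M) (hopt : Optimal M)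
    (j : ℕ) (hj : j + 1 < n) (i1 i2 : Fin n)
    (h10 : M i1 ⟨j, Nat.lt_of_succ_lt hj⟩ = 1 ∧ M i1 ⟨j + 1, hj⟩ = 0)
    (h01 : M i2 ⟨j, Nat.lt_of_succ_lt hj⟩ = 0 ∧ M i2 ⟨j + 1, hj⟩ = 1)
    (hS : RowSum M i1 ⟨j, Nat.lt_of_succ_lt hj⟩ = RowSum M i2 ⟨j, Nat.lt_of_succ_lt hj⟩) :
    IsUniform k (swapTails M i1 i2 j) ∧ Optimal (swapTails M i1 i2 j) := by
  
  set jF : Fin n := ⟨j, Nat.lt_of_succ_lt hj⟩ with hjFdef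
  have hne : i1 ≠ i2 := by
    intro h; rw [h, h01.1] at h10; exact absurd h10.1 (by norm_num)
  set σ := Equiv.swap i1 i2 with hσdef
  have hσσ : ∀ i, σ (σ i) = i := fun i => Equiv.swap_apply_self _ _ _
  have hM' : ∀ i l, swapTails M i1 i2 j i l = if (l : ℕ) ≤ j then M i l else M (σ i) l := by
    intro i l
    unfold swapTails
    by_cases h1 : i = i1
    · subst h1; simp [hσdef, Equiv.swap_apply_left]
    · by_cases h2 : i = i2
      · subst h2; simp [h1, hσdef, Equiv.swap_apply_right]
      · simp [h1, h2, hσdef, Equiv.swap_apply_of_ne_of_ne h1 h2]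
  have hbin' : IsBinary (swapTails M i1 i2 j) := by
    intro i l; rw [hM']; split <;> exact hbin _ _
  -- L1: swapping rows doesn't change partial sums up to column j
  have L1 : ∀ i, RowSum M (σ i) jF = RowSum M i jF := by
    intro i
    by_cases h1 : i = i1
    · subst h1; rw [hσdef, Equiv.swap_apply_left]; exact hS.symm
    · by_cases h2 : i = i2
      · subst h2; rw [hσdef, Equiv.swap_apply_right]; exact hS
      · rw [hσdef, Equiv.swap_apply_of_ne_of_ne h1 h2]
  -- filter description of Iic jF inside Iic j'
  have hfilter : ∀ (j' : Fin n), j ≤ (j' : ℕ) →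
      (Finset.Iic j').filter (fun l : Fin n => (l : ℕ) ≤ j) = Finset.Iic jF := by
    intro j' hjj'
    ext l
    simp only [Finset.mem_filter, Finset.mem_Iic, Fin.le_def]
    constructor
    · rintro ⟨_, h⟩; exact h
    · intro h; exact ⟨le_trans h hjj', h⟩
  -- L3: partial sums up to columns ≤ j are unchanged
  have L3 : ∀ i (j' : Fin n), (j' : ℕ) ≤ j →
      RowSum (swapTails M i1 i2 j) i j' = RowSum M i j' := by
    intro i j' hj'
    refine Finset.sum_congr rfl fun l hl => ?_
    rw [hM']
    rw [Finset.mem_Iic, Fin.le_def] at hl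
    rw [if_pos (le_trans hl hj')]
  -- L2: partial sums up to columns ≥ j equal those of the swapped row
  have L2 : ∀ i (j' : Fin n), j ≤ (j' : ℕ) →
      RowSum (swapTails M i1 i2 j) i j' = RowSum M (σ i) j' := by
    intro i j' hjj'
    rw [RowSum, RowSum,
      ← Finset.sum_filter_add_sum_filter_not (Finset.Iic j') (fun l : Fin n => (l : ℕ) ≤ j)
        (swapTails M i1 i2 j i),
      ← Finset.sum_filter_add_sum_filter_not (Finset.Iic j') (fun l : Fin n => (l : ℕ) ≤ j) (M (σ i))]
    congr 1
    · rw [hfilter j' hjj']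
      calc ∑ l ∈ Finset.Iic jF, swapTails M i1 i2 j i l
          = ∑ l ∈ Finset.Iic jF, M i l := by
            refine Finset.sum_congr rfl fun l hl => ?_
            rw [Finset.mem_Iic, Fin.le_def] at hl
            rw [hM', if_pos hl]
        _ = ∑ l ∈ Finset.Iic jF, M (σ i) l := (L1 i).symm
    · refine Finset.sum_congr rfl fun l hl => ?_
      rw [Finset.mem_filter] at hl
      rw [hM', if_neg hl.2]
  -- uniformity
  have hunif' : IsUniform k (swapTails M i1 i2 j) := by
    constructor
    · intro i
      rw [card_filter_eq_sum _ (hbin' i),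
        ← Finset.sum_filter_add_sum_filter_not Finset.univ (fun l : Fin n => (l : ℕ) ≤ j)
          (swapTails M i1 i2 j i)]
      have huf : (Finset.univ.filter fun l : Fin n => (l : ℕ) ≤ j) = Finset.Iic jF := by
        ext l; rw [Finset.mem_filter, Finset.mem_Iic, Fin.le_def]; exact ⟨fun h => h.2, fun h => ⟨Finset.mem_univ _, h⟩⟩
      rw [huf]
      have e1 : ∑ l ∈ Finset.Iic jF, swapTails M i1 i2 j i l
          = ∑ l ∈ Finset.Iic jF, M (σ i) l := by
        calc ∑ l ∈ Finset.Iic jF, swapTails M i1 i2 j i l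
            = ∑ l ∈ Finset.Iic jF, M i l := by
              refine Finset.sum_congr rfl fun l hl => ?_
              rw [Finset.mem_Iic, Fin.le_def] at hl
              rw [hM', if_pos hl]
          _ = ∑ l ∈ Finset.Iic jF, M (σ i) l := (L1 i).symm
      have e2 : ∑ l ∈ Finset.univ.filter (fun l : Fin n => ¬ (l : ℕ) ≤ j),
          swapTails M i1 i2 j i l
          = ∑ l ∈ Finset.univ.filter (fun l : Fin n => ¬ (l : ℕ) ≤ j), M (σ i) l := by
        refine Finset.sum_congr rfl fun l hl => ?_
        rw [Finset.mem_filter] at hl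
        rw [hM', if_neg hl.2]
      rw [e1, e2, ← huf, Finset.sum_filter_add_sum_filter_not,
        ← card_filter_eq_sum _ (hbin (σ i))]
      exact hunif.1 (σ i)
    · intro l
      by_cases hl : (l : ℕ) ≤ j
      · have : (Finset.univ.filter fun i => swapTails M i1 i2 j i l = 1)
            = Finset.univ.filter fun i => M i l = 1 := by
          refine Finset.filter_congr fun i _ => ?_
          rw [hM', if_pos hl]
        rw [this]; exact hunif.2 l
      · have : (Finset.univ.filter fun i => swapTails M i1 i2 j i l = 1)
            = Finset.univ.filter fun i => M (σ i) l = 1 := by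
          refine Finset.filter_congr fun i _ => ?_
          rw [hM', if_neg hl]
        rw [this]
        rw [← hunif.2 l]
        refine Finset.card_bij' (fun a _ => σ a) (fun a _ => σ a) ?_ ?_ ?_ ?_
        · intro a ha; rw [Finset.mem_filter] at ha ⊢; exact ⟨Finset.mem_univ _, ha.2⟩
        · intro a ha; rw [Finset.mem_filter] at ha ⊢
          exact ⟨Finset.mem_univ _, by rw [hσσ]; exact ha.2⟩
        · intro a _; exact hσσ a
        · intro a _; exact hσσ a
  refine ⟨hunif', ⟨k, hunif'⟩, ?_⟩
  intro j' hj'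
  obtain ⟨φ, hφa, hφ2⟩ := hopt.2 j' hj'
  set jA : Fin n := ⟨j', Nat.lt_of_succ_lt hj'⟩ with hjAdef
  set jB : Fin n := ⟨j' + 1, hj'⟩ with hjBdef
  rcases lt_trichotomy j' j with hlt | heq | hgt
  · -- both columns ≤ j
    have hA : (j' : ℕ) ≤ j := le_of_lt hlt
    have hB : (j' + 1 : ℕ) ≤ j := hlt
    refine ⟨φ, ?_, ?_⟩
    · have s1 : {i | swapTails M i1 i2 j i jA = 1} = {i | M i jA = 1} := by
        ext i; rw [Set.mem_setOf_eq, Set.mem_setOf_eq, hM', if_pos hA]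
      have s2 : {i | swapTails M i1 i2 j i jB = 1} = {i | M i jB = 1} := by
        ext i; rw [Set.mem_setOf_eq, Set.mem_setOf_eq, hM', if_pos hB]
      rw [IsAssignment, s1, s2]; exact hφa
    · intro i hi
      rw [hM', if_pos hA] at hi
      rw [L3 _ _ hA, L3 _ _ hA]
      exact hφ2 i hi
  · -- boundary column: j' = j
    subst heq
    have hA : (j' : ℕ) ≤ j' := le_refl _
    have hjAF : jA = jF := rfl
    refine ⟨σ ∘ φ, ?_, ?_⟩
    · have s1 : {i | swapTails M i1 i2 j' i jA = 1} = {i | M i jA = 1} := by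
        ext i; rw [Set.mem_setOf_eq, Set.mem_setOf_eq, hM', if_pos hA]
      have s2 : {i | swapTails M i1 i2 j' i jB = 1} = σ '' {i | M i jB = 1} := by
        ext i
        rw [Set.mem_setOf_eq, hM', if_neg (by show ¬ j' + 1 ≤ j'; omega : ¬ (jB : ℕ) ≤ j')]
        constructor
        · intro h; exact ⟨σ i, h, hσσ i⟩
        · rintro ⟨x, hx, rfl⟩; rwa [Set.mem_setOf_eq, ← hσσ x] at hx
      rw [IsAssignment, s1, s2]
      exact Set.BijOn.comp ((σ.injective.injOn).bijOn_image) hφa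
    · intro i hi
      rw [hM', if_pos hA] at hi
      have : RowSum (swapTails M i1 i2 j') ((σ ∘ φ) i) jA = RowSum M (φ i) jA := by
        rw [L3 _ _ hA]
        exact L1 (φ i)
      rw [this, L3 _ _ hA]
      exact hφ2 i hi
  · -- both columns > j
    have hA : j ≤ (j' : ℕ) := le_of_lt hgt
    have hAgt : ¬ (jA : ℕ) ≤ j := by show ¬ j' ≤ j; omega
    have hBgt : ¬ (jB : ℕ) ≤ j := by show ¬ j' + 1 ≤ j; omega
    refine ⟨σ ∘ φ ∘ σ, ?_, ?_⟩
    · have s1 : {i | swapTails M i1 i2 j i jA = 1} = σ '' {i | M i jA = 1} := by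
        ext i
        rw [Set.mem_setOf_eq, hM', if_neg hAgt]
        constructor
        · intro h; exact ⟨σ i, h, hσσ i⟩
        · rintro ⟨x, hx, rfl⟩; rwa [Set.mem_setOf_eq, ← hσσ x] at hx
      have s2 : {i | swapTails M i1 i2 j i jB = 1} = σ '' {i | M i jB = 1} := by
        ext i
        rw [Set.mem_setOf_eq, hM', if_neg hBgt]
        constructor
        · intro h; exact ⟨σ i, h, hσσ i⟩
        · rintro ⟨x, hx, rfl⟩; rwa [Set.mem_setOf_eq, ← hσσ x] at hx
      rw [IsAssignment, s1, s2]
      have hσbij : Set.BijOn σ (σ '' {i | M i jA = 1}) {i | M i jA = 1} := by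
        have := (σ.injective.injOn (s := σ '' {i | M i jA = 1})).bijOn_image
        have himg : σ '' (σ '' {i | M i jA = 1}) = {i | M i jA = 1} := by
          ext x
          constructor
          · rintro ⟨y, ⟨z, hz, rfl⟩, rfl⟩; rwa [hσσ]
          · intro hx; exact ⟨σ x, ⟨x, hx, rfl⟩, hσσ x⟩
        rwa [himg] at this
      exact Set.BijOn.comp ((σ.injective.injOn).bijOn_image)
        (Set.BijOn.comp hφa hσbij)
    · intro i hi
      rw [hM', if_neg hAgt] at hi
      have e1 : RowSum (swapTails M i1 i2 j) ((σ ∘ φ ∘ σ) i) jA = RowSum M (φ (σ i)) jA := by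
        rw [L2 _ _ hA]
        simp only [Function.comp_apply, hσσ]
      have e2 : RowSum (swapTails M i1 i2 j) i jA = RowSum M (σ i) jA := L2 _ _ hA
      rw [e1, e2]
      exact hφ2 (σ i) hi
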